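/- Let H = H⁺ ⊕ H⁻ be a finite-dimensional Z₂-graded inner product space and D a self-adjoint odd operator with □ = D². Then for every t > 0 the supertrace Str(e^{−t□}) = trace(ε e^{−t□}) is independent of t and equals dim ker(□|_{H⁺}) − dim ker(□|_{H⁻}) = dim ker D_+ − dim ker D_−. -/

import Mathlib

open RealInnerProductSpace Nat

-- exp applied to a kernel vector is the identity
lemma exp_apply_of_apply_eq_zero {H : Type*} [NormedAddCommGroup H] [NormedSpace ℝ H]
    [CompleteSpace H] (A : H →L[ℝ] H) {y : H} (hy : A y = 0) :
    NormedSpace.exp A y = y := by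
  have hs : Summable fun n : ℕ => (n !⁻¹ : ℝ) • A ^ n :=
    NormedSpace.expSeries_summable' (𝕂 := ℝ) A
  have h1 : NormedSpace.exp A = ∑' n : ℕ, (n !⁻¹ : ℝ) • A ^ n := by
    rw [NormedSpace.exp_eq_tsum ℝ]
  rw [h1]
  have h2 := (ContinuousLinearMap.apply ℝ H y).map_tsum hs
  simp only [ContinuousLinearMap.apply_apply] at h2
  rw [h2]
  have h3 : ∀ n : ℕ, n ≠ 0 → ((n !⁻¹ : ℝ) • A ^ n) y = 0 := by
    intro n hn
    obtain ⟨k, rfl⟩ := Nat.exists_eq_succ_of_ne_zero hn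
    rw [ContinuousLinearMap.smul_apply, pow_succ, ContinuousLinearMap.mul_apply, hy,
      map_zero, smul_zero]
  rw [tsum_eq_single 0 h3]
  simp

theorem stmt_8 {H : Type*} [NormedAddCommGroup H] [InnerProductSpace ℝ H]
    [FiniteDimensional ℝ H]
    (Hp Hm : Submodule ℝ H) (hcompl : IsCompl Hp Hm)
    (horth : ∀ x ∈ Hp, ∀ y ∈ Hm, ⟪x, y⟫ = 0)
    (D : H →L[ℝ] H)
    (hD_sa : ∀ x y : H, ⟪D x, y⟫ = ⟪x, D y⟫)
    (hD_odd : (∀ x ∈ Hp, D x ∈ Hm) ∧ (∀ x ∈ Hm, D x ∈ Hp))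
    (ε : H →ₗ[ℝ] H) (hεp : ∀ x ∈ Hp, ε x = x) (hεm : ∀ x ∈ Hm, ε x = -x) :
    ∀ t : ℝ, 0 < t →
      LinearMap.trace ℝ H (ε ∘ₗ (NormedSpace.exp ((-t) • (D.comp D))).toLinearMap) =
          (Module.finrank ℝ (LinearMap.ker ((D.comp D : H →L[ℝ] H) : H →ₗ[ℝ] H) ⊓ Hp : Submodule ℝ H) : ℝ)
            - (Module.finrank ℝ (LinearMap.ker ((D.comp D : H →L[ℝ] H) : H →ₗ[ℝ] H) ⊓ Hm : Submodule ℝ H) : ℝ)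
      ∧ LinearMap.trace ℝ H (ε ∘ₗ (NormedSpace.exp ((-t) • (D.comp D))).toLinearMap) =
          (Module.finrank ℝ (LinearMap.ker (D : H →ₗ[ℝ] H) ⊓ Hp : Submodule ℝ H) : ℝ)
            - (Module.finrank ℝ (LinearMap.ker (D : H →ₗ[ℝ] H) ⊓ Hm : Submodule ℝ H) : ℝ) := by
  intro t ht
  -- kernel of D² equals kernel of D
  have hker : LinearMap.ker ((D.comp D : H →L[ℝ] H) : H →ₗ[ℝ] H) = LinearMap.ker (D : H →ₗ[ℝ] H) := by
    ext x
    simp only [LinearMap.mem_ker, ContinuousLinearMap.coe_coe, ContinuousLinearMap.coe_comp', Function.comp_apply]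
    constructor
    · intro hx
      have h1 : ⟪D (D x), x⟫ = ⟪D x, D x⟫ := hD_sa (D x) x
      rw [hx, inner_zero_left] at h1
      exact inner_self_eq_zero.mp h1.symm
    · intro hx; rw [hx, map_zero]
  -- parity anticommutes with D
  have hεK : ∀ x, D x = 0 → D (ε x) = 0 := by
    intro x hx
    obtain ⟨pp, mm, hp, hm, rfl⟩ := Submodule.codisjoint_iff_exists_add_eq.mp hcompl.codisjoint x
    have : ε (pp + mm) = pp - mm := by
      rw [map_add, hεp pp hp, hεm mm hm]; abel
    rw [this]
    have h1 : D pp + D mm = 0 := by rw [← map_add]; exact hx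
    have h2 : D pp ∈ Hm := hD_odd.1 pp hp
    have h3 : D mm ∈ Hp := hD_odd.2 mm hm
    have h4 : D pp = 0 ∧ D mm = 0 := by
      have hDppm : D pp = -D mm := by linear_combination (norm := abel) h1
      have : D mm ∈ Hp ⊓ Hm := ⟨h3, by rw [← neg_neg (D mm), ← hDppm]; exact Hm.neg_mem h2⟩
      rw [hcompl.inf_eq_bot] at this
      simp only [Submodule.mem_bot] at this
      exact ⟨by rw [hDppm, this, neg_zero], this⟩
    rw [map_sub, h4.1, h4.2, sub_zero]
  have hanti : ∀ x, ε (D x) = - D (ε x) := by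
    intro x
    obtain ⟨pp, mm, hp, hm, rfl⟩ := Submodule.codisjoint_iff_exists_add_eq.mp hcompl.codisjoint x
    have hεx : ε (pp + mm) = pp - mm := by
      rw [map_add, hεp pp hp, hεm mm hm]; abel
    rw [map_add, map_add, hεm _ (hD_odd.1 pp hp), hεp _ (hD_odd.2 mm hm), hεx, map_sub]
    abel
  -- orthogonal projection onto K = ker D
  set K : Submodule ℝ H := LinearMap.ker (D : H →ₗ[ℝ] H) with hK
  let P : H →L[ℝ] H := K.subtypeL.comp (K.orthogonalProjectionOnto)
  have hPmem : ∀ x, P x ∈ K := fun x => (K.orthogonalProjectionOnto x).2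
  have hPid : ∀ x ∈ K, P x = x := fun x hx => Submodule.starProjection_eq_self_iff.mpr hx
  have hPsymm : ∀ x y : H, ⟪P x, y⟫ = ⟪x, P y⟫ := fun x y =>
    Submodule.inner_starProjection_left_eq_right K x y
  have hDP : ∀ x, D (P x) = 0 := fun x => hPmem x
  have hPD : ∀ x, P (D x) = 0 := by
    intro x
    have h1 : ⟪P (D x), P (D x)⟫ = 0 := by
      rw [hPsymm, hPid (P (D x)) (hPmem (D x)), hD_sa, hDP, inner_zero_right]
    exact inner_self_eq_zero.mp h1
  -- the heat operator
  set E : H →L[ℝ] H := NormedSpace.exp ((-t) • (D.comp D)) with hE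
  have hEP : ∀ x, E (P x) = P x := by
    intro x
    apply exp_apply_of_apply_eq_zero
    have : D (D (P x)) = 0 := by rw [hDP, map_zero]
    simp only [ContinuousLinearMap.smul_apply, ContinuousLinearMap.coe_comp',
      Function.comp_apply, this, smul_zero]
  have hED : E * D = D * E := by
    have h1 : Commute ((-t) • (D.comp D)) D := by
      show ((-t) • (D.comp D)) * D = D * ((-t) • (D.comp D))
      ext x
      simp [ContinuousLinearMap.mul_apply, map_smul]
    exact (h1.exp_left)
  -- pass to linear endomorphisms
  set d : Module.End ℝ H := D.toLinearMap with hd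
  set e : Module.End ℝ H := E.toLinearMap with he
  set p : Module.End ℝ H := P.toLinearMap with hp'
  have r1 : e * p = p := by ext x; exact hEP x
  have r2 : ε * d = -(d * ε) := by
    ext x
    simpa [hd] using hanti x
  have r3 : e * d = d * e := by
    ext x
    exact DFunLike.congr_fun (congrArg ContinuousLinearMap.toLinearMap hED) x
  have r4 : d * p = 0 := by ext x; exact hDP x
  have r5 : p * d = 0 := by ext x; exact hPD x
  have r6 : p * p = p := by ext x; exact hPid _ (hPmem x)
  -- the invertible operator s = d + p
  have hs_inj : Function.Injective (d + p) := by
    rw [← LinearMap.ker_eq_bot]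
    rw [Submodule.eq_bot_iff]
    intro x hx
    simp only [LinearMap.mem_ker, LinearMap.add_apply] at hx
    have h1 : P (D x) + P (P x) = 0 := by
      rw [← map_add]
      have : D x + P x = 0 := hx
      rw [this, map_zero]
    rw [hPD, zero_add] at h1
    have hPPx : P (P x) = P x := hPid _ (hPmem x)
    rw [hPPx] at h1
    have h2 : D x = 0 := by
      have := hx; rwa [show p x = P x from rfl, h1, add_zero] at this
    have h3 : P x = x := hPid x h2
    rw [← h3, h1]
  have hs_surj : Function.Surjective (d + p) :=
    LinearMap.surjective_of_injective hs_inj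
  let seq : H ≃ₗ[ℝ] H := LinearEquiv.ofBijective (d + p) ⟨hs_inj, hs_surj⟩
  set s : Module.End ℝ H := d + p with hs
  set s' : Module.End ℝ H := seq.symm.toLinearMap with hs'
  have hs's : s' * s = 1 := by
    ext x; exact seq.symm_apply_apply x
  have hss' : s * s' = 1 := by
    ext x; exact seq.apply_symm_apply x
  have hsd : d * s = s * d := by
    rw [hs, mul_add, add_mul, r4, r5]
  have hs'd : d * s' = s' * d := by
    calc d * s' = (s' * s) * (d * s') := by rw [hs's, one_mul]
      _ = s' * ((s * d) * s') := by noncomm_ring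
      _ = s' * ((d * s) * s') := by rw [hsd]
      _ = s' * (d * (s * s')) := by noncomm_ring
      _ = s' * d := by rw [hss', mul_one]
  have hone_sub_p : (1 : Module.End ℝ H) - p = s' * d := by
    have h1 : s * (1 - p) = d := by
      rw [hs]; rw [mul_sub, mul_one, add_mul, r4, r6]; abel
    calc (1 : Module.End ℝ H) - p = 1 * (1 - p) := (one_mul _).symm
      _ = (s' * s) * (1 - p) := by rw [hs's]
      _ = s' * (s * (1 - p)) := by rw [mul_assoc]
      _ = s' * d := by rw [h1]
  -- trace of the off-kernel part vanishes
  have htr0 : LinearMap.trace ℝ H (ε * e * (1 - p)) = 0 := by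
    have hdε : d * ε = -(ε * d) := by rw [r2, neg_neg]
    have key : ε * e * (1 - p) = (ε * e * s') * d := by
      rw [hone_sub_p]; noncomm_ring
    have key2 : d * (ε * e * s') = -(ε * e * (1 - p)) := by
      calc d * (ε * e * s') = (d * ε) * (e * s') := by noncomm_ring
        _ = -(ε * d) * (e * s') := by rw [hdε]
        _ = -(ε * (d * e) * s') := by noncomm_ring
        _ = -(ε * (e * d) * s') := by rw [r3]
        _ = -(ε * e * (s' * d)) := by rw [← hs'd]; noncomm_ring
        _ = -(ε * e * (1 - p)) := by rw [← hone_sub_p]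
    have h1 : LinearMap.trace ℝ H (ε * e * (1 - p)) =
        - LinearMap.trace ℝ H (ε * e * (1 - p)) := by
      conv_lhs => rw [key, LinearMap.trace_mul_comm ℝ (ε * e * s') d, key2, map_neg]
    linarith
  -- the supertrace equals the trace of ε p
  have hsplit : LinearMap.trace ℝ H (ε * e) = LinearMap.trace ℝ H (ε * p) := by
    have h1 : ε * e = ε * e * p + ε * e * (1 - p) := by noncomm_ring
    have h2 : ε * e * p = ε * p := by rw [mul_assoc, r1]
    rw [h1, map_add, h2, htr0, add_zero]
  -- the projections onto K ⊓ Hp and K ⊓ Hm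
  set piplus : Module.End ℝ H := (2⁻¹ : ℝ) • (p + ε * p) with hpilus
  set piminus : Module.End ℝ H := (2⁻¹ : ℝ) • (p - ε * p) with hpiminus
  have hKsplit : ∀ u : H, u ∈ K → ((2⁻¹ : ℝ) • (u + ε u) ∈ K ⊓ Hp ∧
      (2⁻¹ : ℝ) • (u - ε u) ∈ K ⊓ Hm) := by
    intro u hu
    obtain ⟨pp, mm, hpmem, hmmem, hdecomp⟩ :=
      Submodule.codisjoint_iff_exists_add_eq.mp hcompl.codisjoint u
    have hεu : ε u = pp - mm := by
      rw [← hdecomp, map_add, hεp pp hpmem, hεm mm hmmem]; abel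
    have hεuK : ε u ∈ K := hεK u hu
    have hplus : (2⁻¹ : ℝ) • (u + ε u) = pp := by
      rw [hεu, ← hdecomp]
      rw [show pp + mm + (pp - mm) = (2 : ℝ) • pp by
        rw [two_smul]; abel]
      rw [smul_smul]; norm_num
    have hminus : (2⁻¹ : ℝ) • (u - ε u) = mm := by
      rw [hεu, ← hdecomp]
      rw [show pp + mm - (pp - mm) = (2 : ℝ) • mm by
        rw [two_smul]; abel]
      rw [smul_smul]; norm_num
    constructor
    · rw [hplus]
      refine ⟨?_, hpmem⟩
      have : pp = (2⁻¹ : ℝ) • (u + ε u) := hplus.symm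
      rw [this]
      exact K.smul_mem _ (K.add_mem hu hεuK)
    · rw [hminus]
      refine ⟨?_, hmmem⟩
      have : mm = (2⁻¹ : ℝ) • (u - ε u) := hminus.symm
      rw [this]
      exact K.smul_mem _ (K.sub_mem hu hεuK)
  have hprojp : LinearMap.IsProj (K ⊓ Hp) piplus := by
    constructor
    · intro x
      have := (hKsplit (P x) (hPmem x)).1
      simpa [piplus, smul_add, hp'] using this
    · rintro x ⟨hxK, hxHp⟩
      have h1 : P x = x := hPid x hxK
      have h2 : ε x = x := hεp x hxHp
      show (2⁻¹ : ℝ) • (p x + (ε * p) x) = x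
      show (2⁻¹ : ℝ) • (P x + ε (P x)) = x
      rw [h1, h2, ← two_smul ℝ x, smul_smul]; norm_num
  have hprojm : LinearMap.IsProj (K ⊓ Hm) piminus := by
    constructor
    · intro x
      have := (hKsplit (P x) (hPmem x)).2
      simpa [piminus, smul_sub, hp'] using this
    · rintro x ⟨hxK, hxHm⟩
      have h1 : P x = x := hPid x hxK
      have h2 : ε x = -x := hεm x hxHm
      show (2⁻¹ : ℝ) • (p x - (ε * p) x) = x
      show (2⁻¹ : ℝ) • (P x - ε (P x)) = x
      rw [h1, h2, sub_neg_eq_add, ← two_smul ℝ x, smul_smul]; norm_num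
  have hεp_decomp : ε * p = piplus - piminus := by
    rw [hpilus, hpiminus, ← smul_sub]
    rw [show p + ε * p - (p - ε * p) = (2 : ℝ) • (ε * p) by
      rw [two_smul]; abel]
    rw [smul_smul]; norm_num
  have htrεp : LinearMap.trace ℝ H (ε * p) =
      (Module.finrank ℝ (K ⊓ Hp : Submodule ℝ H) : ℝ)
        - (Module.finrank ℝ (K ⊓ Hm : Submodule ℝ H) : ℝ) := by
    rw [hεp_decomp, map_sub, hprojp.trace, hprojm.trace]
  -- conclusion
  have hmain : LinearMap.trace ℝ H (ε ∘ₗ E.toLinearMap) =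
      (Module.finrank ℝ (K ⊓ Hp : Submodule ℝ H) : ℝ)
        - (Module.finrank ℝ (K ⊓ Hm : Submodule ℝ H) : ℝ) := by
    rw [show ε ∘ₗ E.toLinearMap = ε * e from rfl, hsplit, htrεp]
  refine ⟨?_, ?_⟩
  · rw [hker]; exact hmain
  · exact hmain
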